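/- Let (Z^(i), R^(i)), i = 1, 2, ..., be i.i.d. copies of (Z, R), fix j ∈ Fin d, suppose Z_j is integrable and P(R_j = 1) > 0, and let q : ℝ^d → [0, 1] be a measurable function such that q(Z) is a version of the conditional probability E[1_{R_j = 1} | σ(Z)]. Define π_j^N := N^{-1} Σ_{i ≤ N} q(Z^(i)) and μ̂_j^N := (N π_j^N)^{-1} Σ_{i ≤ N} Z^(i)_j q(Z^(i)) (defined arbitrarily when π_j^N = 0). Then π_j^N converges almost surely to P(R_j = 1), and μ̂_j^N is a consistent estimator of the conditional mean of the j-th feature: μ̂_j^N converges almost surely, as N → ∞, to E[Z_j | R_j = 1]. -/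

import Mathlib

open MeasureTheory ProbabilityTheory Filter

/-- Consistency of the missingness-weighted estimators: with `q(Z)` a version of the conditional
probability `P(R_j = 1 | Z)`, the empirical observation probability
`π_j^N = N⁻¹ Σ_{i ≤ N} q(Z^(i))` converges almost surely to `P(R_j = 1)`, and the weighted
estimator `μ̂_j^N = (N π_j^N)⁻¹ Σ_{i ≤ N} Z^(i)_j q(Z^(i))` converges almost surely to the
conditional mean `E[Z_j | R_j = 1]`. -/
theorem stmt_4 {Ω : Type*} [MeasurableSpace Ω] (P : Measure Ω) [IsProbabilityMeasure P]
    {d : ℕ} (Z : Ω → (Fin d → ℝ)) (R : Ω → (Fin d → Bool))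
    (hZ : Measurable Z) (hR : Measurable R)
    (ZR : ℕ → Ω → ((Fin d → ℝ) × (Fin d → Bool)))
    (hmeas : ∀ i, Measurable (ZR i))
    (hindep : iIndepFun ZR P)
    (hident : ∀ i, IdentDistrib (ZR i) (fun ω => (Z ω, R ω)) P P)
    (j : Fin d)
    (hint : Integrable (fun ω => Z ω j) P)
    (hpos : 0 < P {ω | R ω j = true})
    (q : (Fin d → ℝ) → ℝ) (hq_meas : Measurable q)
    (hq01 : ∀ z, q z ∈ Set.Icc (0 : ℝ) 1)
    (hq : (fun ω => q (Z ω)) =ᵐ[P]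
      P[Set.indicator {ω | R ω j = true} (fun _ => (1 : ℝ)) |
        MeasurableSpace.comap Z inferInstance]) :
    (∀ᵐ ω ∂P, Tendsto (fun N : ℕ => (N : ℝ)⁻¹ * ∑ i ∈ Finset.range N, q ((ZR i ω).1)) atTop
        (nhds (P {ω | R ω j = true}).toReal))
    ∧
    (∀ᵐ ω ∂P, Tendsto
        (fun N : ℕ => ((N : ℝ) * ((N : ℝ)⁻¹ * ∑ i ∈ Finset.range N, q ((ZR i ω).1)))⁻¹ *
          ∑ i ∈ Finset.range N, (ZR i ω).1 j * q ((ZR i ω).1)) atTop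
        (nhds ((P {ω | R ω j = true}).toReal⁻¹ *
          ∫ ω, Z ω j * Set.indicator {ω | R ω j = true} (fun _ => (1 : ℝ)) ω ∂P))) := by
  classical
  have hmle := hZ.comap_le
  haveI : SigmaFinite (P.trim hmle) := by
    haveI := isFiniteMeasure_trim hmle (μ := P)
    infer_instance
  set A : Set Ω := {ω | R ω j = true} with hA_def
  have hA : MeasurableSet A := by
    have : A = (fun ω => R ω j) ⁻¹' {true} := rfl
    rw [this]
    exact ((measurable_pi_apply j).comp hR) (measurableSet_singleton true)
  set g : Ω → ℝ := Set.indicator A (fun _ => (1 : ℝ)) with hg_def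
  have hg_int : Integrable g P := (integrable_const (1 : ℝ)).indicator hA
  -- measurability of φ's
  have hφ1 : Measurable (fun p : (Fin d → ℝ) × (Fin d → Bool) => q p.1) :=
    hq_meas.comp measurable_fst
  have hφ2 : Measurable (fun p : (Fin d → ℝ) × (Fin d → Bool) => p.1 j * q p.1) :=
    ((measurable_pi_apply j).comp measurable_fst).mul hφ1
  -- integral of q(Z) is P(A)
  have hqZ_int : Integrable (fun ω => q (Z ω)) P := by
    refine Integrable.mono' (integrable_const (1 : ℝ))
      (hq_meas.comp hZ).aestronglyMeasurable (ae_of_all _ fun ω => ?_)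
    have h := hq01 (Z ω)
    rw [Real.norm_eq_abs, abs_le]
    exact ⟨le_trans (by norm_num) h.1, h.2⟩
  have I1 : ∫ ω, q (Z ω) ∂P = (P A).toReal := by
    rw [integral_congr_ae hq, integral_condExp hmle]
    exact integral_indicator_one hA
  -- integrability of Z_j * g and Z_j * q(Z)
  have hZg_int : Integrable (fun ω => Z ω j * g ω) P := by
    have : (fun ω => Z ω j * g ω) = A.indicator (fun ω => Z ω j) := by
      funext ω
      by_cases h : ω ∈ A <;> simp [hg_def, Set.indicator_of_mem, Set.indicator_of_notMem, h]
    rw [this]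
    exact hint.indicator hA
  have hZq_int : Integrable (fun ω => Z ω j * q (Z ω)) P := by
    refine Integrable.mono' hint.abs
      ((((measurable_pi_apply j).comp hZ)).mul (hq_meas.comp hZ)).aestronglyMeasurable
      (ae_of_all _ fun ω => ?_)
    have h := hq01 (Z ω)
    rw [Real.norm_eq_abs, abs_mul]
    calc |Z ω j| * |q (Z ω)| ≤ |Z ω j| * 1 := by
          exact mul_le_mul_of_nonneg_left (abs_le.2 ⟨le_trans (by norm_num) h.1, h.2⟩)
            (abs_nonneg _)
      _ = |Z ω j| := mul_one _
  -- Zj is m-strongly measurable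
  have hZj_m : StronglyMeasurable[MeasurableSpace.comap Z MeasurableSpace.pi]
      (fun ω => Z ω j) := by
    have hZm : Measurable[MeasurableSpace.comap Z MeasurableSpace.pi] Z :=
      fun s hs => ⟨s, hs, rfl⟩
    exact ((measurable_pi_apply j).comp hZm).stronglyMeasurable
  have I2 : ∫ ω, Z ω j * q (Z ω) ∂P = ∫ ω, Z ω j * g ω ∂P := by
    have hpull : P[(fun ω => Z ω j) * g | MeasurableSpace.comap Z MeasurableSpace.pi]
          =ᵐ[P] (fun ω => Z ω j) * P[g | MeasurableSpace.comap Z MeasurableSpace.pi] :=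
      condExp_mul_of_stronglyMeasurable_left hZj_m hZg_int hg_int
    have h1 : ∫ ω, Z ω j * g ω ∂P
        = ∫ ω, (P[(fun ω => Z ω j) * g | MeasurableSpace.comap Z MeasurableSpace.pi]) ω ∂P :=
      (integral_condExp hmle).symm
    have h2 : (fun ω => Z ω j * q (Z ω))
        =ᵐ[P] P[(fun ω => Z ω j) * g | MeasurableSpace.comap Z MeasurableSpace.pi] := by
      filter_upwards [hq, hpull] with ω hq1 hq2
      simp only [Pi.mul_apply] at hq2 ⊢
      rw [hq1, ← hq2]
    rw [integral_congr_ae h2, ← h1]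
  -- SLLN for X1
  set X1 : ℕ → Ω → ℝ := fun i ω => q ((ZR i ω).1) with hX1
  have hid1 : ∀ i, IdentDistrib (X1 i) (fun ω => q (Z ω)) P P := fun i =>
    (hident i).comp hφ1
  have h1int : Integrable (X1 0) P := ((hid1 0).integrable_iff).2 hqZ_int
  have hSLLN1 : ∀ᵐ ω ∂P,
      Tendsto (fun N : ℕ => (∑ i ∈ Finset.range N, X1 i ω) / N) atTop (nhds (∫ ω, X1 0 ω ∂P)) :=
    strong_law_ae_real X1 h1int
      (fun i k hik => (hindep.indepFun hik).comp hφ1 hφ1)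
      (fun i => (hid1 i).trans (hid1 0).symm)
  have hE1 : ∫ ω, X1 0 ω ∂P = (P A).toReal := by
    rw [(hid1 0).integral_eq, I1]
  -- SLLN for X2
  set X2 : ℕ → Ω → ℝ := fun i ω => (ZR i ω).1 j * q ((ZR i ω).1) with hX2
  have hid2 : ∀ i, IdentDistrib (X2 i) (fun ω => Z ω j * q (Z ω)) P P := fun i =>
    (hident i).comp hφ2
  have h2int : Integrable (X2 0) P := ((hid2 0).integrable_iff).2 hZq_int
  have hSLLN2 : ∀ᵐ ω ∂P,
      Tendsto (fun N : ℕ => (∑ i ∈ Finset.range N, X2 i ω) / N) atTop (nhds (∫ ω, X2 0 ω ∂P)) :=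
    strong_law_ae_real X2 h2int
      (fun i k hik => (hindep.indepFun hik).comp hφ2 hφ2)
      (fun i => (hid2 i).trans (hid2 0).symm)
  have hE2 : ∫ ω, X2 0 ω ∂P = ∫ ω, Z ω j * g ω ∂P := by
    rw [(hid2 0).integral_eq, I2]
  have hc : (0 : ℝ) < (P A).toReal :=
    ENNReal.toReal_pos hpos.ne' (measure_ne_top P A)
  constructor
  · filter_upwards [hSLLN1] with ω hω
    rw [← hE1]
    have heq : (fun N : ℕ => (N : ℝ)⁻¹ * ∑ i ∈ Finset.range N, X1 i ω)
        = fun N : ℕ => (∑ i ∈ Finset.range N, X1 i ω) / N := by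
      funext N; rw [div_eq_mul_inv, mul_comm]
    exact heq ▸ hω
  · filter_upwards [hSLLN1, hSLLN2] with ω hω1 hω2
    rw [← hE2]
    have h1' : Tendsto (fun N : ℕ => (N : ℝ)⁻¹ * ∑ i ∈ Finset.range N, X1 i ω) atTop
        (nhds (P A).toReal) := by
      rw [← hE1]
      have heq : (fun N : ℕ => (N : ℝ)⁻¹ * ∑ i ∈ Finset.range N, X1 i ω)
          = fun N : ℕ => (∑ i ∈ Finset.range N, X1 i ω) / N := by
        funext N; rw [div_eq_mul_inv, mul_comm]
      exact heq ▸ hω1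
    have h2' : Tendsto (fun N : ℕ => (N : ℝ)⁻¹ * ∑ i ∈ Finset.range N, X2 i ω) atTop
        (nhds (∫ ω, X2 0 ω ∂P)) := by
      have heq : (fun N : ℕ => (N : ℝ)⁻¹ * ∑ i ∈ Finset.range N, X2 i ω)
          = fun N : ℕ => (∑ i ∈ Finset.range N, X2 i ω) / N := by
        funext N; rw [div_eq_mul_inv, mul_comm]
      exact heq ▸ hω2
    have hlim := (h1'.inv₀ hc.ne').mul h2'
    refine hlim.congr fun N => ?_
    rw [mul_inv]
    ring
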